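/- If R ≅ Z₂ × Z₄ or R ≅ Z₂ × Z₂[X]/(X²), then γ_t(Γ(R)) = γ(Γ(R)) = 2. -/

import Mathlib

/-- Vertices of the zero-divisor graph: nonzero zero-divisors. -/
def zdVerts (R : Type*) [CommRing R] : Set R :=
  {x | x ≠ 0 ∧ ∃ y ≠ 0, x * y = 0}

/-- The set of all zero-divisors (including 0 when R is nontrivial). -/
def zdSet (R : Type*) [CommRing R] : Set R :=
  {x | ∃ y ≠ 0, x * y = 0}

/-- A dominating set of the zero-divisor graph Γ(R) (loops allowed: `x` is
adjacent to itself iff `x^2 = 0`). -/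
def IsDomSet (R : Type*) [CommRing R] (X : Set R) : Prop :=
  X ⊆ zdVerts R ∧ ∀ v ∈ zdVerts R, v ∉ X → ∃ x ∈ X, x * v = 0

/-- A total dominating set of Γ(R): every vertex has a neighbor in `X`
(possibly itself, if looped). -/
def IsTotDomSet (R : Type*) [CommRing R] (X : Set R) : Prop :=
  X ⊆ zdVerts R ∧ ∀ v ∈ zdVerts R, ∃ x ∈ X, x * v = 0

/-- The domination number γ(Γ(R)), as a cardinal. -/
noncomputable def domNum (R : Type*) [CommRing R] : Cardinal :=
  ⨅ X : {X : Set R // IsDomSet R X}, Cardinal.mk X.1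

/-- The total domination number γ_t(Γ(R)), as a cardinal. -/
noncomputable def totDomNum (R : Type*) [CommRing R] : Cardinal :=
  ⨅ X : {X : Set R // IsTotDomSet R X}, Cardinal.mk X.1

/-- The zero-divisor graph as a simple graph (loops discarded), used for girth. -/
def zdGraph (R : Type*) [CommRing R] : SimpleGraph R where
  Adj r s := r ≠ s ∧ r ≠ 0 ∧ s ≠ 0 ∧ r * s = 0
  symm := by constructor; intro r s h; exact ⟨h.1.symm, h.2.2.1, h.2.1, by rw [mul_comm]; exact h.2.2.2⟩
  loopless := by constructor; intro r h; exact h.1 rfl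

section aux

universe u v

variable {R : Type u} {R' : Type v} [CommRing R] [CommRing R']

lemma aux_isDomSet_verts : IsDomSet R (zdVerts R) :=
  ⟨subset_rfl, fun _ hv hnv => absurd hv hnv⟩

lemma aux_isTotDomSet_verts : IsTotDomSet R (zdVerts R) := by
  refine ⟨subset_rfl, fun v hv => ?_⟩
  obtain ⟨hv0, y, hy0, hvy⟩ := hv
  exact ⟨y, ⟨hy0, v, hv0, by rw [mul_comm]; exact hvy⟩, by rw [mul_comm]; exact hvy⟩

instance aux_nonemptyDom : Nonempty {X : Set R // IsDomSet R X} := ⟨⟨_, aux_isDomSet_verts⟩⟩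
instance aux_nonemptyTot : Nonempty {X : Set R // IsTotDomSet R X} := ⟨⟨_, aux_isTotDomSet_verts⟩⟩

lemma aux_mem_zdVerts_map (e : R ≃+* R') {x : R} (hx : x ∈ zdVerts R) : e x ∈ zdVerts R' := by
  obtain ⟨hx0, y, hy0, hxy⟩ := hx
  refine ⟨by simpa using hx0, e y, by simpa using hy0, ?_⟩
  rw [← map_mul, hxy, map_zero]

lemma aux_isDomSet_preimage (e : R ≃+* R') {X' : Set R'} (h : IsDomSet R' X') :
    IsDomSet R (e ⁻¹' X') := by
  constructor
  · intro x hx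
    have h2 := aux_mem_zdVerts_map e.symm (h.1 hx)
    simpa using h2
  · intro v hv hnv
    obtain ⟨x', hx', hxv⟩ := h.2 (e v) (aux_mem_zdVerts_map e hv) hnv
    refine ⟨e.symm x', by simp [hx'], e.injective ?_⟩
    rw [map_mul, map_zero, RingEquiv.apply_symm_apply]
    exact hxv

lemma aux_isTotDomSet_preimage (e : R ≃+* R') {X' : Set R'} (h : IsTotDomSet R' X') :
    IsTotDomSet R (e ⁻¹' X') := by
  constructor
  · intro x hx
    have h2 := aux_mem_zdVerts_map e.symm (h.1 hx)
    simpa using h2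
  · intro v hv
    obtain ⟨x', hx', hxv⟩ := h.2 (e v) (aux_mem_zdVerts_map e hv)
    refine ⟨e.symm x', by simp [hx'], e.injective ?_⟩
    rw [map_mul, map_zero, RingEquiv.apply_symm_apply]
    exact hxv

lemma aux_domNum_le_totDomNum : domNum R ≤ totDomNum R := by
  unfold domNum totDomNum
  refine le_ciInf fun X => ?_
  exact ciInf_le' (fun Y : {X : Set R // IsDomSet R X} => Cardinal.mk Y.1)
    ⟨X.1, X.2.1, fun v hv _ => X.2.2 v hv⟩

lemma aux_totDomNum_le_two (e : R ≃+* R') (X' : Set R')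
    (hX' : IsTotDomSet R' X') (hmk : Cardinal.mk X' = 2) : totDomNum R ≤ 2 := by
  have hset : (e ⁻¹' X') = (e.symm : R' → R) '' X' := by
    ext x
    simp only [Set.mem_preimage, Set.mem_image]
    constructor
    · intro hx; exact ⟨e x, hx, e.symm_apply_apply x⟩
    · rintro ⟨y, hy, rfl⟩; simpa using hy
  have hl : Cardinal.lift.{v} (Cardinal.mk (e ⁻¹' X' : Set R))
      = Cardinal.lift.{u} (Cardinal.mk X') := by
    rw [Cardinal.lift_mk_eq']
    exact ⟨(Equiv.setCongr hset).trans (Equiv.Set.image _ X' e.symm.injective).symm⟩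
  have h2 : Cardinal.mk (e ⁻¹' X' : Set R) = 2 := by
    rw [← Cardinal.lift_inj.{u, v}, hl, hmk]
    simp
  calc totDomNum R ≤ Cardinal.mk (e ⁻¹' X' : Set R) :=
        ciInf_le' (fun Y : {X : Set R // IsTotDomSet R X} => Cardinal.mk Y.1) ⟨e ⁻¹' X', aux_isTotDomSet_preimage e hX'⟩
    _ = 2 := h2

lemma aux_two_le_domNum (e : R ≃+* R')
    (h : ∀ X' : Set R', IsDomSet R' X' → (2 : Cardinal) ≤ Cardinal.mk X') :
    (2 : Cardinal) ≤ domNum R := by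
  unfold domNum
  refine le_ciInf fun X => ?_
  have h2 := h _ (aux_isDomSet_preimage e.symm X.2)
  rw [Cardinal.two_le_iff] at h2 ⊢
  obtain ⟨⟨a, ha⟩, ⟨b, hb⟩, hab⟩ := h2
  refine ⟨⟨e.symm a, ha⟩, ⟨e.symm b, hb⟩, fun hEq => hab ?_⟩
  exact Subtype.ext (e.symm.injective (congrArg Subtype.val hEq))

end aux

section key

variable {S : Type*} [CommRing S]

lemma aux_zmod2 : ∀ a : ZMod 2, a = 0 ∨ a = 1 := by decide

lemma aux_vert_char (ε : S) (hε0 : ε ≠ 0) (hε2 : ε * ε = 0)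
    (hall : ∀ b : S, b = 0 ∨ b = 1 ∨ b = ε ∨ b = 1 + ε) (p : ZMod 2 × S) :
    p ∈ zdVerts (ZMod 2 × S) ↔ (p.1 = 0 ∧ p.2 ≠ 0) ∨ (p.1 = 1 ∧ (p.2 = 0 ∨ p.2 = ε)) := by
  have h10 : (1 : S) ≠ 0 := by
    intro h1
    exact hε0 (by calc ε = ε * 1 := (mul_one ε).symm
      _ = 0 := by rw [h1, mul_zero])
  have hinv : (1 - ε) * (1 + ε) = 1 := by linear_combination -hε2
  constructor
  · rintro ⟨hp0, ⟨y1, y2⟩, hy0, hpy⟩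
    have hpy1 : p.1 * y1 = 0 := congrArg Prod.fst hpy
    have hpy2 : p.2 * y2 = 0 := congrArg Prod.snd hpy
    rcases aux_zmod2 p.1 with h1 | h1
    · exact Or.inl ⟨h1, fun h2 => hp0 (Prod.ext h1 h2)⟩
    · refine Or.inr ⟨h1, ?_⟩
      have hy1 : y1 = 0 := by rwa [h1, one_mul] at hpy1
      have hy2 : y2 ≠ 0 := fun h => hy0 (Prod.ext hy1 h)
      rcases hall p.2 with h2 | h2 | h2 | h2
      · exact Or.inl h2
      · exact absurd (by rwa [h2, one_mul] at hpy2) hy2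
      · exact Or.inr h2
      · exfalso
        apply hy2
        calc y2 = ((1 - ε) * (1 + ε)) * y2 := by rw [hinv, one_mul]
          _ = (1 - ε) * (p.2 * y2) := by rw [← h2]; ring
          _ = 0 := by rw [hpy2, mul_zero]
  · rintro (⟨h1, h2⟩ | ⟨h1, h2⟩)
    · refine ⟨fun h => h2 (congrArg Prod.snd h), (1, 0), fun h => ?_, ?_⟩
      · exact one_ne_zero (congrArg Prod.fst h)
      · exact Prod.ext (by show p.1 * 1 = 0; rw [mul_one, h1])
          (by show p.2 * 0 = 0; exact mul_zero _)
    · have hp1 : p.1 ≠ 0 := by rw [h1]; exact one_ne_zero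
      refine ⟨fun h => hp1 (congrArg Prod.fst h), ?_⟩
      rcases h2 with h2 | h2
      · exact ⟨(0, 1), fun h => h10 (congrArg Prod.snd h),
          Prod.ext (by show p.1 * 0 = 0; exact mul_zero _)
            (by show p.2 * 1 = 0; rw [mul_one, h2])⟩
      · exact ⟨(0, ε), fun h => hε0 (congrArg Prod.snd h),
          Prod.ext (by show p.1 * 0 = 0; exact mul_zero _)
            (by show p.2 * ε = 0; rw [h2]; exact hε2)⟩

lemma aux_key (ε : S) (hε0 : ε ≠ 0) (hε2 : ε * ε = 0)
    (hall : ∀ b : S, b = 0 ∨ b = 1 ∨ b = ε ∨ b = 1 + ε) :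
    (∃ X₀ : Set (ZMod 2 × S), IsTotDomSet (ZMod 2 × S) X₀ ∧ Cardinal.mk X₀ = 2) ∧
      (∀ X : Set (ZMod 2 × S), IsDomSet (ZMod 2 × S) X → (2 : Cardinal) ≤ Cardinal.mk X) := by
  have h10 : (1 : S) ≠ 0 := by
    intro h1
    exact hε0 (by calc ε = ε * 1 := (mul_one ε).symm
      _ = 0 := by rw [h1, mul_zero])
  have hε1 : ε ≠ 1 := fun h => h10 (by rw [h, one_mul] at hε2; exact hε2)
  have h1ε0 : (1 : S) + ε ≠ 0 := fun h => h10 (by linear_combination (1 - ε) * h + hε2)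
  have vchar := aux_vert_char ε hε0 hε2 hall
  set X₀ : Set (ZMod 2 × S) := insert ((1 : ZMod 2), (0 : S)) {((0 : ZMod 2), ε)} with hX₀
  have hX₀tot : IsTotDomSet (ZMod 2 × S) X₀ := by
    constructor
    · intro x hx
      rcases hx with h | h
      · rw [h, vchar]; exact Or.inr ⟨rfl, Or.inl rfl⟩
      · rw [Set.mem_singleton_iff] at h
        rw [h, vchar]; exact Or.inl ⟨rfl, hε0⟩
    · intro v hv
      rw [vchar] at hv
      rcases hv with ⟨h1, h2⟩ | ⟨h1, h2⟩
      · refine ⟨(1, 0), Set.mem_insert _ _, Prod.ext ?_ ?_⟩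
        · show (1 : ZMod 2) * v.1 = 0; rw [one_mul, h1]
        · show (0 : S) * v.2 = 0; rw [zero_mul]
      · refine ⟨(0, ε), Set.mem_insert_of_mem _ rfl, Prod.ext ?_ ?_⟩
        · show (0 : ZMod 2) * v.1 = 0; rw [zero_mul]
        · show ε * v.2 = 0
          rcases h2 with h2 | h2
          · rw [h2, mul_zero]
          · rw [h2, hε2]
  have hmk : Cardinal.mk X₀ = 2 := by
    rw [hX₀, Cardinal.mk_insert, Cardinal.mk_singleton, one_add_one_eq_two]
    intro h
    rw [Set.mem_singleton_iff] at h
    exact one_ne_zero (congrArg Prod.fst h)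
  have escape : ∀ x ∈ zdVerts (ZMod 2 × S),
      ∃ v ∈ zdVerts (ZMod 2 × S), v ≠ x ∧ x * v ≠ 0 := by
    rintro ⟨x1, x2⟩ hx
    rw [vchar] at hx
    rcases hx with ⟨h1, h2⟩ | ⟨h1, h2⟩
    · simp only at h1 h2
      subst h1
      rcases hall x2 with h | h | h | h
      · exact absurd h h2
      · refine ⟨(0, ε), by rw [vchar]; exact Or.inl ⟨rfl, hε0⟩, ?_, ?_⟩
        · intro hv; exact hε1 ((congrArg Prod.snd hv).trans h)
        · intro hv
          rw [Prod.mk_mul_mk] at hv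
          have h3 : x2 * ε = 0 := congrArg Prod.snd hv
          rw [h, one_mul] at h3; exact hε0 h3
      · refine ⟨(0, 1), by rw [vchar]; exact Or.inl ⟨rfl, h10⟩, ?_, ?_⟩
        · intro hv; exact hε1 ((congrArg Prod.snd hv).trans h).symm
        · intro hv
          rw [Prod.mk_mul_mk] at hv
          have h3 : x2 * 1 = 0 := congrArg Prod.snd hv
          rw [mul_one, h] at h3; exact hε0 h3
      · refine ⟨(0, 1), by rw [vchar]; exact Or.inl ⟨rfl, h10⟩, ?_, ?_⟩
        · intro hv
          have h3 : (1 : S) = 1 + ε := (congrArg Prod.snd hv).trans h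
          exact hε0 (by linear_combination -h3)
        · intro hv
          rw [Prod.mk_mul_mk] at hv
          have h3 : x2 * 1 = 0 := congrArg Prod.snd hv
          rw [mul_one, h] at h3; exact h1ε0 h3
    · simp only at h1 h2
      subst h1
      rcases h2 with h | h
      · refine ⟨(1, ε), by rw [vchar]; exact Or.inr ⟨rfl, Or.inr rfl⟩, ?_, ?_⟩
        · intro hv; exact hε0 ((congrArg Prod.snd hv).trans h)
        · intro hv
          rw [Prod.mk_mul_mk] at hv
          have h3 : (1 : ZMod 2) * 1 = 0 := congrArg Prod.fst hv
          rw [one_mul] at h3; exact one_ne_zero h3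
      · refine ⟨(1, 0), by rw [vchar]; exact Or.inr ⟨rfl, Or.inl rfl⟩, ?_, ?_⟩
        · intro hv; exact hε0 (((congrArg Prod.snd hv).trans h).symm)
        · intro hv
          rw [Prod.mk_mul_mk] at hv
          have h3 : (1 : ZMod 2) * 1 = 0 := congrArg Prod.fst hv
          rw [one_mul] at h3; exact one_ne_zero h3
  refine ⟨⟨X₀, hX₀tot, hmk⟩, ?_⟩
  intro X hX
  have hv₀ : ((1 : ZMod 2), (0 : S)) ∈ zdVerts (ZMod 2 × S) := by
    rw [vchar]; exact Or.inr ⟨rfl, Or.inl rfl⟩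
  obtain ⟨x, hxX⟩ : ∃ x, x ∈ X := by
    by_cases hv : ((1 : ZMod 2), (0 : S)) ∈ X
    · exact ⟨_, hv⟩
    · obtain ⟨x, hx, -⟩ := hX.2 _ hv₀ hv; exact ⟨x, hx⟩
  obtain ⟨v, hvV, hvx, hxv⟩ := escape x (hX.1 hxX)
  rw [Cardinal.two_le_iff]
  by_cases hvX : v ∈ X
  · exact ⟨⟨x, hxX⟩, ⟨v, hvX⟩, fun h => hvx (congrArg Subtype.val h).symm⟩
  · obtain ⟨y, hyX, hyv⟩ := hX.2 v hvV hvX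
    refine ⟨⟨x, hxX⟩, ⟨y, hyX⟩, fun h => hxv ?_⟩
    rw [show x = y from congrArg Subtype.val h]
    exact hyv

end key

section quot

lemma aux_withbot (n : WithBot ℕ) (h : n < 2) : n ≤ 1 :=
  Order.le_of_lt_succ (by norm_num [Order.succ] at h ⊢; exact h)

noncomputable def auxEps : Polynomial (ZMod 2) ⧸
    Ideal.span {(Polynomial.X : Polynomial (ZMod 2)) ^ 2} :=
  Ideal.Quotient.mk _ Polynomial.X

lemma auxEps_sq : auxEps * auxEps = 0 := by
  rw [auxEps, ← map_mul, ← sq, Ideal.Quotient.eq_zero_iff_mem]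
  exact Ideal.subset_span rfl

lemma auxEps_ne_zero : auxEps ≠ 0 := by
  rw [auxEps, Ne, Ideal.Quotient.eq_zero_iff_mem, Ideal.mem_span_singleton]
  intro hdvd
  have h := Polynomial.natDegree_le_of_dvd hdvd Polynomial.X_ne_zero
  simp [Polynomial.natDegree_X_pow, Polynomial.natDegree_X] at h

lemma auxEps_all (b : Polynomial (ZMod 2) ⧸
    Ideal.span {(Polynomial.X : Polynomial (ZMod 2)) ^ 2}) :
    b = 0 ∨ b = 1 ∨ b = auxEps ∨ b = 1 + auxEps := by
  obtain ⟨p, rfl⟩ := Ideal.Quotient.mk_surjective b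
  have hmon : (Polynomial.X ^ 2 : Polynomial (ZMod 2)).Monic := Polynomial.monic_X_pow 2
  set I := Ideal.span {(Polynomial.X : Polynomial (ZMod 2)) ^ 2} with hI
  have hrw : Ideal.Quotient.mk I p = Ideal.Quotient.mk I (p %ₘ Polynomial.X ^ 2) := by
    conv_lhs => rw [← Polynomial.modByMonic_add_div p (Polynomial.X ^ 2)]
    rw [map_add, map_mul,
      show Ideal.Quotient.mk I (Polynomial.X ^ 2) = 0 from
        Ideal.Quotient.eq_zero_iff_mem.2 (Ideal.subset_span rfl),
      zero_mul, add_zero]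
  rw [hrw]
  set r := p %ₘ Polynomial.X ^ 2 with hr
  have hdeg : r.degree < 2 := by
    have h := Polynomial.degree_modByMonic_lt p hmon
    simpa using h
  have hdeg1 : r.degree ≤ 1 := aux_withbot _ hdeg
  have heq := Polynomial.eq_X_add_C_of_degree_le_one hdeg1
  rw [heq, map_add, map_mul]
  rcases aux_zmod2 (r.coeff 1) with h1 | h1 <;> rcases aux_zmod2 (r.coeff 0) with h0 | h0
  · left; rw [h1, h0]; simp
  · right; left; rw [h1, h0]; simp
  · right; right; left; rw [h1, h0, auxEps]; simp; rfl
  · right; right; right; rw [h1, h0, auxEps]; simp [add_comm]; rfl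

end quot

theorem stmt_12 (R : Type*) [CommRing R]
    (h : Nonempty (R ≃+* ZMod 2 × ZMod 4) ∨
      Nonempty (R ≃+* ZMod 2 ×
        (Polynomial (ZMod 2) ⧸ Ideal.span {(Polynomial.X : Polynomial (ZMod 2)) ^ 2}))) :
    totDomNum R = 2 ∧ domNum R = 2 := by
  have hdt := aux_domNum_le_totDomNum (R := R)
  rcases h with ⟨⟨e⟩⟩ | ⟨⟨e⟩⟩
  · obtain ⟨⟨X₀, hX₀, hmk⟩, hlb⟩ := aux_key (2 : ZMod 4) (by decide) (by decide) (by decide)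
    have hub := aux_totDomNum_le_two e X₀ hX₀ hmk
    have h2 := aux_two_le_domNum e hlb
    exact ⟨le_antisymm hub (h2.trans hdt), le_antisymm (hdt.trans hub) h2⟩
  · obtain ⟨⟨X₀, hX₀, hmk⟩, hlb⟩ := aux_key auxEps auxEps_ne_zero auxEps_sq auxEps_all
    have hub := aux_totDomNum_le_two e X₀ hX₀ hmk
    have h2 := aux_two_le_domNum e hlb
    exact ⟨le_antisymm hub (h2.trans hdt), le_antisymm (hdt.trans hub) h2⟩
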